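/- Let S and S' be sets of Hermitian operators on a finite-dimensional Hilbert space H_B such that every element of S commutes with every element of S'. Then there exists a finite index set V and a unitary isomorphism H_B ≅ ⊕_{β∈V} H_{β_l} ⊗ H_{β_r} under which every element of S acts as an operator of the form ⊕_β A_β ⊗ I_{β_r} and every element of S' acts as an operator of the form ⊕_β I_{β_l} ⊗ B_β. -/

import Mathlib

open scoped InnerProductSpace

namespace Stmt1Aux

open Submodule

variable {E : Type*} [NormedAddCommGroup E] [InnerProductSpace ℂ E] [FiniteDimensional ℂ E]

/-- invariance of a subspace under a set of operators -/
def SInv (F : Set (E →ₗ[ℂ] E)) (W : Submodule ℂ E) : Prop := ∀ a ∈ F, ∀ x ∈ W, a x ∈ W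

/-- minimal nonzero invariant subspace -/
def SMin (F : Set (E →ₗ[ℂ] E)) (W : Submodule ℂ E) : Prop :=
  SInv F W ∧ W ≠ ⊥ ∧ ∀ W' ≤ W, SInv F W' → W' = ⊥ ∨ W' = W

theorem sinv_orthogonal {F : Set (E →ₗ[ℂ] E)} (hF : ∀ a ∈ F, LinearMap.adjoint a = a)
    {W : Submodule ℂ E} (hW : SInv F W) : SInv F Wᗮ := by
  intro a ha x hx
  rw [Submodule.mem_orthogonal] at hx ⊢
  intro u hu
  have : ⟪u, a x⟫_ℂ = ⟪LinearMap.adjoint a u, x⟫_ℂ := (LinearMap.adjoint_inner_left a x u).symm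
  rw [this, hF a ha]
  exact hx _ (hW a ha u hu)

theorem exists_smin {F : Set (E →ₗ[ℂ] E)} :
    ∀ (V : Submodule ℂ E), SInv F V → V ≠ ⊥ → ∃ W ≤ V, SMin F W := by
  intro V
  induction' hn : Module.finrank ℂ V using Nat.strong_induction_on with n ih generalizing V
  intro hV hVne
  by_cases h : ∃ W' ≤ V, SInv F W' ∧ W' ≠ ⊥ ∧ W' ≠ V
  · obtain ⟨W', hW'V, hW'inv, hW'ne, hW'neV⟩ := h
    have hlt : Module.finrank ℂ W' < n := by
      subst hn; exact Submodule.finrank_lt_finrank_of_lt (lt_of_le_of_ne hW'V hW'neV)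
    obtain ⟨W, hWW', hW⟩ := ih _ hlt W' rfl hW'inv hW'ne
    exact ⟨W, hWW'.trans hW'V, hW⟩
  · push_neg at h
    refine ⟨V, le_rfl, hV, hVne, fun W' hle hinv => ?_⟩
    by_contra hc
    push_neg at hc
    exact hc.2 (h W' hle hinv hc.1)

/-- decomposition of an invariant subspace into pairwise-orthogonal minimal invariants -/
theorem exists_decomp {F : Set (E →ₗ[ℂ] E)} (hF : ∀ a ∈ F, LinearMap.adjoint a = a) :
    ∀ (V : Submodule ℂ E), SInv F V →
    ∃ (K : ℕ) (W : Fin K → Submodule ℂ E),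
      (∀ k, SMin F (W k)) ∧ (∀ k, W k ≤ V) ∧
      (∀ k l, k ≠ l → ∀ x ∈ W k, ∀ y ∈ W l, ⟪x, y⟫_ℂ = 0) ∧
      (⨆ k, W k) = V := by
  intro V
  induction' hn : Module.finrank ℂ V using Nat.strong_induction_on with n ih generalizing V
  intro hV
  by_cases hVne : V = ⊥
  · refine ⟨0, ![], by simp, by simp, by simp, ?_⟩
    simp [hVne, iSup_of_empty]
  obtain ⟨W₀, hW₀V, hW₀⟩ := exists_smin V hV hVne
  set V' := W₀ᗮ ⊓ V with hV'def
  have hV'inv : SInv F V' := fun a ha x hx =>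
    ⟨sinv_orthogonal hF hW₀.1 a ha x hx.1, hV a ha x hx.2⟩
  have hrank : Module.finrank ℂ W₀ + Module.finrank ℂ V' = Module.finrank ℂ V :=
    Submodule.finrank_add_inf_finrank_orthogonal hW₀V
  have hW₀pos : 0 < Module.finrank ℂ W₀ := by
    have : Nontrivial W₀ := Submodule.nontrivial_iff_ne_bot.mpr hW₀.2.1
    exact Module.finrank_pos
  have hlt : Module.finrank ℂ V' < n := by omega
  obtain ⟨K, W, hmin, hle, horth, hsup⟩ := ih _ hlt V' rfl hV'inv
  refine ⟨K + 1, Fin.cons W₀ W, ?_, ?_, ?_, ?_⟩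
  · exact Fin.cases hW₀ hmin
  · exact Fin.cases hW₀V (fun k => (hle k).trans inf_le_right)
  · have hWorth : ∀ k, W k ≤ W₀ᗮ := fun k => (hle k).trans inf_le_left
    intro k l hkl x hx y hy
    rcases Fin.eq_zero_or_eq_succ k with rfl | ⟨k', rfl⟩ <;>
      rcases Fin.eq_zero_or_eq_succ l with rfl | ⟨l', rfl⟩
    · exact absurd rfl hkl
    · simp only [Fin.cons_zero, Fin.cons_succ] at hx hy
      exact (Submodule.mem_orthogonal _ _).mp (hWorth l' hy) x hx
    · simp only [Fin.cons_zero, Fin.cons_succ] at hx hy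
      exact inner_eq_zero_symm.mp ((Submodule.mem_orthogonal _ _).mp (hWorth k' hx) y hy)
    · simp only [Fin.cons_succ] at hx hy
      exact horth k' l' (fun h => hkl (by rw [h])) x hx y hy
  · rw [iSup_split_single _ 0]
    have h2 : (⨆ (k : Fin (K+1)) (_ : k ≠ 0), Fin.cons W₀ W k) = ⨆ (k : Fin K), W k := by
      apply le_antisymm
      · refine iSup_le fun k => iSup_le fun hk => ?_
        obtain ⟨k', rfl⟩ := Fin.eq_succ_of_ne_zero hk
        simp only [Fin.cons_succ]
        exact le_iSup W k'
      · refine iSup_le fun k' => ?_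
        have h1 := le_iSup₂ (f := fun (k : Fin (K+1)) (_ : k ≠ 0) => Fin.cons W₀ W k) k'.succ
            (Fin.succ_ne_zero k')
        simpa using h1
    rw [h2, hsup, Fin.cons_zero]
    exact Submodule.sup_orthogonal_inf_of_hasOrthogonalProjection hW₀V

/-- intertwining property for a map between invariant subspaces -/
def Itw (F : Set (E →ₗ[ℂ] E)) {W W' : Submodule ℂ E} (hW : SInv F W)
    (T : W →ₗ[ℂ] W') : Prop :=
  ∀ a (ha : a ∈ F) (x : W), (T ⟨a x, hW a ha x x.2⟩ : E) = a (T x : E)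

theorem schur_scalar {F : Set (E →ₗ[ℂ] E)} {W : Submodule ℂ E} (hW : SMin F W)
    {T : W →ₗ[ℂ] W} (hT : Itw F hW.1 T) : ∃ c : ℂ, ∀ x : W, T x = c • x := by
  have : Nontrivial W := Submodule.nontrivial_iff_ne_bot.mpr hW.2.1
  obtain ⟨c, hc⟩ := Module.End.exists_eigenvalue (T : Module.End ℂ W)
  refine ⟨c, ?_⟩
  set U : Submodule ℂ E := (Module.End.eigenspace (T : Module.End ℂ W) c).map W.subtype with hU
  have hUle : U ≤ W := Submodule.map_subtype_le _ _
  have hUinv : SInv F U := by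
    intro a ha x hx
    obtain ⟨y, hy, rfl⟩ := hx
    simp only [SetLike.mem_coe] at hy
    rw [Module.End.mem_eigenspace_iff] at hy
    refine ⟨⟨a y, hW.1 a ha y y.2⟩, ?_, rfl⟩
    simp only [SetLike.mem_coe, Module.End.mem_eigenspace_iff]
    apply Subtype.ext
    show (T ⟨a y, _⟩ : E) = ((c • (⟨a ↑y, _⟩ : W) : W) : E)
    rw [hT a ha y]
    show a (T y : E) = c • (a (y : E))
    rw [show T y = c • y from hy]
    simp
  have hUne : U ≠ ⊥ := by
    obtain ⟨v, hv⟩ := hc.exists_hasEigenvector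
    intro h
    have hvU : (v : E) ∈ U := ⟨v, hv.1, rfl⟩
    rw [h, Submodule.mem_bot, Submodule.coe_eq_zero] at hvU
    exact hv.2 hvU
  have hUW : U = W := ((hW.2.2 U hUle hUinv).resolve_left hUne)
  intro x
  have hx : (x : E) ∈ U := by rw [hUW]; exact x.2
  obtain ⟨y, hy, hyx⟩ := hx
  simp only [SetLike.mem_coe] at hy
  have hyy : y = x := Subtype.ext hyx
  subst hyy
  exact Module.End.mem_eigenspace_iff.mp hy

theorem schur_cases {F : Set (E →ₗ[ℂ] E)} {W W' : Submodule ℂ E} (hW : SMin F W)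
    (hW' : SMin F W') {T : W →ₗ[ℂ] W'} (hT : Itw F hW.1 T) :
    T = 0 ∨ Function.Bijective T := by
  have hTsub : ∀ a (ha : a ∈ F) (x : W), T ⟨a x, hW.1 a ha x x.2⟩ =
      ⟨a (T x : E), hW'.1 a ha _ (T x).2⟩ := fun a ha x => Subtype.ext (hT a ha x)
  by_cases hker : (LinearMap.ker T).map W.subtype = W
  · left
    ext x
    have hx : (x : E) ∈ (LinearMap.ker T).map W.subtype := by rw [hker]; exact x.2
    obtain ⟨y, hy, hyx⟩ := hx
    have : y = x := Subtype.ext hyx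
    subst this
    simpa using hy
  · have hkinv : SInv F ((LinearMap.ker T).map W.subtype) := by
      intro a ha x hx
      obtain ⟨y, hy, rfl⟩ := hx
      simp only [SetLike.mem_coe, LinearMap.mem_ker] at hy
      refine ⟨⟨a y, hW.1 a ha y y.2⟩, ?_, rfl⟩
      simp only [SetLike.mem_coe, LinearMap.mem_ker, hTsub a ha y, hy]
      simp
    have hkbot : (LinearMap.ker T).map W.subtype = ⊥ :=
      (hW.2.2 _ (Submodule.map_subtype_le _ _) hkinv).resolve_right hker
    have hinj : Function.Injective T := by
      rw [← LinearMap.ker_eq_bot, eq_bot_iff]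
      intro x hx
      have hmem : (x : E) ∈ (LinearMap.ker T).map W.subtype := ⟨x, hx, rfl⟩
      rw [hkbot, Submodule.mem_bot, Submodule.coe_eq_zero] at hmem
      simpa using hmem
    have hrinv : SInv F ((LinearMap.range T).map W'.subtype) := by
      intro a ha x hx
      obtain ⟨y, hy, rfl⟩ := hx
      simp only [SetLike.mem_coe, LinearMap.mem_range] at hy
      obtain ⟨z, rfl⟩ := hy
      exact ⟨T ⟨a z, hW.1 a ha z z.2⟩, ⟨_, rfl⟩, (hT a ha z)⟩
    rcases hW'.2.2 _ (Submodule.map_subtype_le _ _) hrinv with hbot | htop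
    · left
      ext x
      have : (T x : E) ∈ (LinearMap.range T).map W'.subtype := ⟨T x, ⟨x, rfl⟩, rfl⟩
      rw [hbot, Submodule.mem_bot, Submodule.coe_eq_zero] at this
      simpa using this
    · right
      refine ⟨hinj, fun y => ?_⟩
      have : (y : E) ∈ (LinearMap.range T).map W'.subtype := by rw [htop]; exact y.2
      obtain ⟨z, hz, hzy⟩ := this
      simp only [SetLike.mem_coe, LinearMap.mem_range] at hz
      obtain ⟨x, rfl⟩ := hz
      exact ⟨x, Subtype.ext hzy⟩

theorem itw_adjoint {F : Set (E →ₗ[ℂ] E)} (hF : ∀ a ∈ F, LinearMap.adjoint a = a)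
    {W W' : Submodule ℂ E} (hW : SInv F W) (hW' : SInv F W')
    {T : W →ₗ[ℂ] W'} (hT : Itw F hW T) : Itw F hW' (LinearMap.adjoint T) := by
  intro a ha y
  have hsa : ∀ (u v : E), ⟪a u, v⟫_ℂ = ⟪u, a v⟫_ℂ := by
    intro u v
    conv_lhs => rw [← hF a ha]
    exact LinearMap.adjoint_inner_left a v u
  have key : LinearMap.adjoint T ⟨a y, hW' a ha y y.2⟩ =
      ⟨a ((LinearMap.adjoint T y : W) : E), hW a ha _ (LinearMap.adjoint T y).2⟩ := by
    refine ext_inner_right ℂ fun x => ?_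
    calc ⟪LinearMap.adjoint T ⟨a ↑y, hW' a ha ↑y y.2⟩, x⟫_ℂ
        = ⟪(⟨a ↑y, hW' a ha ↑y y.2⟩ : W'), T x⟫_ℂ := LinearMap.adjoint_inner_left T x _
      _ = ⟪a (y : E), ((T x : W') : E)⟫_ℂ := by rw [Submodule.coe_inner]
      _ = ⟪(y : E), a ((T x : W') : E)⟫_ℂ := hsa _ _
      _ = ⟪(y : E), (T ⟨a ↑x, hW a ha ↑x x.2⟩ : E)⟫_ℂ := by rw [hT a ha x]
      _ = ⟪y, T ⟨a ↑x, hW a ha ↑x x.2⟩⟫_ℂ := by rw [Submodule.coe_inner]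
      _ = ⟪LinearMap.adjoint T y, (⟨a ↑x, hW a ha ↑x x.2⟩ : W)⟫_ℂ :=
            (LinearMap.adjoint_inner_left T _ y).symm
      _ = ⟪((LinearMap.adjoint T y : W) : E), a ↑x⟫_ℂ := by rw [Submodule.coe_inner]
      _ = ⟪a ((LinearMap.adjoint T y : W) : E), (x : E)⟫_ℂ := (hsa _ _).symm
      _ = ⟪(⟨a ((LinearMap.adjoint T y : W) : E), hW a ha _ (LinearMap.adjoint T y).2⟩ : W),
            x⟫_ℂ := by rw [Submodule.coe_inner]
  rw [key]

theorem itw_smul {F : Set (E →ₗ[ℂ] E)} {W W' : Submodule ℂ E} {hW : SInv F W}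
    {T : W →ₗ[ℂ] W'} (hT : Itw F hW T) (c : ℂ) : Itw F hW (c • T) := by
  intro a ha x
  show ((c • T ⟨a ↑x, _⟩ : W') : E) = a ((c • T x : W') : E)
  rw [Submodule.coe_smul, hT a ha x, ← map_smul, Submodule.coe_smul]

theorem exists_unitary_itw {F : Set (E →ₗ[ℂ] E)} (hF : ∀ a ∈ F, LinearMap.adjoint a = a)
    {W W' : Submodule ℂ E} (hW : SMin F W) (hW' : SMin F W')
    {T : W →ₗ[ℂ] W'} (hT : Itw F hW.1 T) (hTne : T ≠ 0) :
    ∃ T' : W →ₗ[ℂ] W', Itw F hW.1 T' ∧ Function.Bijective T' ∧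
      ∀ x y : W, ⟪T' x, T' y⟫_ℂ = ⟪x, y⟫_ℂ := by
  have hadj := itw_adjoint hF hW.1 hW'.1 hT
  have hcomp : Itw F hW.1 ((LinearMap.adjoint T) ∘ₗ T) := by
    intro a ha x
    have h1 : T ⟨a ↑x, hW.1 a ha ↑x x.2⟩ = ⟨a ((T x : W') : E), hW'.1 a ha _ (T x).2⟩ :=
      Subtype.ext (hT a ha x)
    show (LinearMap.adjoint T (T ⟨a ↑x, _⟩) : E) = a _
    rw [h1, hadj a ha (T x)]
    rfl
  obtain ⟨c, hc⟩ := schur_scalar hW hcomp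
  obtain ⟨x₀, hx₀⟩ : ∃ x₀ : W, T x₀ ≠ 0 := by
    by_contra h
    push_neg at h
    exact hTne (LinearMap.ext fun x => h x)
  have hx₀ne : x₀ ≠ 0 := fun h => hx₀ (by rw [h, map_zero])
  have hinner : ∀ x y : W, ⟪T x, T y⟫_ℂ = c * ⟪x, y⟫_ℂ := by
    intro x y
    rw [← LinearMap.adjoint_inner_right T x (T y),
      show LinearMap.adjoint T (T y) = c • y from hc y, inner_smul_right]
  have hcval : c * (‖x₀‖ : ℂ) ^ 2 = (‖T x₀‖ : ℂ) ^ 2 := by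
    have h3 := hinner x₀ x₀
    rw [inner_self_eq_norm_sq_to_K, inner_self_eq_norm_sq_to_K] at h3
    exact h3.symm
  set s : ℝ := ‖T x₀‖ / ‖x₀‖ with hs
  have hn₀ : ‖x₀‖ ≠ 0 := norm_ne_zero_iff.mpr hx₀ne
  have hsne : (s : ℂ) ≠ 0 := by
    simp only [hs, Complex.ofReal_ne_zero]
    exact div_ne_zero (norm_ne_zero_iff.mpr hx₀) hn₀
  have hcs : c = (s : ℂ) ^ 2 := by
    have h2 : ((‖x₀‖ : ℂ)) ≠ 0 := by exact_mod_cast hn₀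
    rw [hs]
    push_cast
    rw [div_pow, eq_div_iff (pow_ne_zero 2 h2)]
    exact hcval
  have hip : ∀ x y : W, ⟪((s⁻¹:ℂ) • T) x, ((s⁻¹:ℂ) • T) y⟫_ℂ = ⟪x, y⟫_ℂ := by
    intro x y
    simp only [LinearMap.smul_apply, inner_smul_left, inner_smul_right, hinner, hcs]
    rw [map_inv₀, Complex.conj_ofReal]
    field_simp
  refine ⟨(s⁻¹ : ℂ) • T, itw_smul hT _, ?_, hip⟩
  refine (schur_cases hW hW' (itw_smul hT _)).resolve_left ?_
  intro h
  apply hx₀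
  have h4 := congrFun (congrArg DFunLike.coe h) x₀
  simp only [LinearMap.smul_apply, LinearMap.zero_apply, smul_eq_zero] at h4
  rcases h4 with h1 | h1
  · exact absurd h1 (inv_ne_zero hsne)
  · exact h1

theorem proj_comm {F : Set (E →ₗ[ℂ] E)} (hF : ∀ a ∈ F, LinearMap.adjoint a = a)
    {W : Submodule ℂ E} (hW : SInv F W) {a : E →ₗ[ℂ] E} (ha : a ∈ F) (y : E) :
    (orthogonalProjection W (a y) : E) = a (orthogonalProjection W y) := by
  have hWo := sinv_orthogonal hF hW
  have h1 : a y = a ↑(orthogonalProjection W y) + a (y - ↑(orthogonalProjection W y)) := by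
    rw [← map_add]
    congr 1
    abel
  rw [h1, map_add]
  have h2 : (orthogonalProjection W (a ↑(orthogonalProjection W y)) : E)
      = a ↑(orthogonalProjection W y) :=
    starProjection_eq_self_iff.mpr (hW a ha _ (orthogonalProjection W y).2)
  have h3 : orthogonalProjection W (a (y - ↑(orthogonalProjection W y))) = 0 :=
    orthogonalProjection_mem_subspace_orthogonalComplement_eq_zero
      (hWo a ha _ (sub_starProjection_mem_orthogonal y))
  rw [Submodule.coe_add, h2, h3, Submodule.coe_zero, add_zero]

theorem sum_proj {K : ℕ} (W : Fin K → Submodule ℂ E)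
    (horth : ∀ k l, k ≠ l → ∀ x ∈ W k, ∀ y ∈ W l, ⟪x, y⟫_ℂ = 0)
    (hsup : (⨆ k, W k) = ⊤) (x : E) :
    ∑ k, (orthogonalProjection (W k) x : E) = x := by
  set L : E →ₗ[ℂ] E :=
    ∑ k, (W k).subtype ∘ₗ (orthogonalProjection (W k) : E →ₗ[ℂ] W k) with hL
  have hLy : ∀ l, ∀ y ∈ W l, L y = y := by
    intro l y hy
    have : L y = ∑ k, (orthogonalProjection (W k) y : E) := by
      simp [hL, LinearMap.sum_apply]
    rw [this, Finset.sum_eq_single l]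
    · exact starProjection_eq_self_iff.mpr hy
    · intro k _ hkl
      have : y ∈ (W k)ᗮ := (Submodule.mem_orthogonal _ _).mpr fun u hu =>
        horth k l hkl u hu y hy
      rw [orthogonalProjection_mem_subspace_orthogonalComplement_eq_zero this,
        Submodule.coe_zero]
    · intro h
      exact absurd (Finset.mem_univ l) h
  have hLid : ∀ z : E, L z = z := by
    intro z
    have hle : (⨆ k, W k) ≤ LinearMap.eqLocus L LinearMap.id :=
      iSup_le fun k y hy => hLy k y hy
    rw [hsup] at hle
    exact hle trivial
  have : L x = ∑ k, (orthogonalProjection (W k) x : E) := by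
    simp [hL, LinearMap.sum_apply]
  rw [← this, hLid x]

theorem itw_comp {F : Set (E →ₗ[ℂ] E)} {W W' W'' : Submodule ℂ E} {hW : SInv F W}
    (hW' : SInv F W') {T : W →ₗ[ℂ] W'} {T' : W' →ₗ[ℂ] W''}
    (hT : Itw F hW T) (hT' : Itw F hW' T') : Itw F hW (T' ∘ₗ T) := by
  intro a ha x
  show (T' (T ⟨a ↑x, _⟩) : E) = a (T' (T x) : E)
  rw [show T ⟨a ↑x, hW a ha ↑x x.2⟩ = ⟨a ↑(T x), hW' a ha _ (T x).2⟩ from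
    Subtype.ext (hT a ha x)]
  exact hT' a ha (T x)

theorem core {F F' : Set (E →ₗ[ℂ] E)} (hF : ∀ a ∈ F, LinearMap.adjoint a = a)
    (hcomm : ∀ a ∈ F, ∀ g ∈ F', ∀ x, a (g x) = g (a x)) :
    ∃ (n : ℕ) (dl dr : Fin n → ℕ)
      (w : (Σ β : Fin n, Fin (dl β) × Fin (dr β)) → E),
      Orthonormal ℂ w ∧ Submodule.span ℂ (Set.range w) = ⊤ ∧
      (∀ a ∈ F, ∃ A : ∀ β, Matrix (Fin (dl β)) (Fin (dl β)) ℂ,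
        ∀ β i' j, a (w ⟨β, (i', j)⟩) = ∑ i, A β i i' • w ⟨β, (i, j)⟩) ∧
      (∀ g ∈ F', ∃ B : ∀ β, Matrix (Fin (dr β)) (Fin (dr β)) ℂ,
        ∀ β i j', g (w ⟨β, (i, j')⟩) = ∑ j, B β j j' • w ⟨β, (i, j)⟩) := by
  classical
  obtain ⟨K, W, hmin, -, horth, hsup⟩ :=
    exists_decomp hF ⊤ (fun a _ x _ => Submodule.mem_top)
  -- the equivalence relation of being intertwined
  set R : Fin K → Fin K → Prop :=
    fun k l => ∃ T : W k →ₗ[ℂ] W l, Itw F (hmin k).1 T ∧ T ≠ 0 with hR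
  have hnontriv : ∀ k, Nontrivial (W k) :=
    fun k => Submodule.nontrivial_iff_ne_bot.mpr (hmin k).2.1
  have hRrefl : ∀ k, R k k := by
    intro k
    refine ⟨LinearMap.id, fun a ha x => rfl, ?_⟩
    have := hnontriv k
    obtain ⟨x, hx⟩ := exists_ne (0 : W k)
    intro h
    exact hx (by simpa using congrFun (congrArg DFunLike.coe h) x)
  have hRsymm : ∀ {k l}, R k l → R l k := by
    rintro k l ⟨T, hT, hTne⟩
    refine ⟨LinearMap.adjoint T, itw_adjoint hF (hmin k).1 (hmin l).1 hT, ?_⟩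
    intro h
    apply hTne
    have := congrArg LinearMap.adjoint h
    rwa [LinearMap.adjoint_adjoint, map_zero] at this
  have hRtrans : ∀ {k l m}, R k l → R l m → R k m := by
    rintro k l m ⟨T, hT, hTne⟩ ⟨T', hT', hTne'⟩
    refine ⟨T' ∘ₗ T, itw_comp (hmin l).1 hT hT', ?_⟩
    have hbij := (schur_cases (hmin k) (hmin l) hT).resolve_left hTne
    have hbij' := (schur_cases (hmin l) (hmin m) hT').resolve_left hTne'
    intro h
    have := hnontriv k
    obtain ⟨x, hx⟩ := exists_ne (0 : W k)
    have h0 : T' (T x) = 0 := by simpa using congrFun (congrArg DFunLike.coe h) x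
    exact hx (hbij.1 (hbij'.1 (by simpa using h0)))
  set sd : Setoid (Fin K) := ⟨R, fun k => hRrefl k, hRsymm, hRtrans⟩ with hsd
  letI : DecidableEq (Quotient sd) := Classical.decEq _
  set n := Fintype.card (Quotient sd) with hn
  set enum : Fin n ≃ Quotient sd := (Fintype.equivFin (Quotient sd)).symm with henum
  set dl : Fin n → ℕ := fun β => Module.finrank ℂ (W (enum β).out) with hdl
  set dr : Fin n → ℕ := fun β => Fintype.card {k : Fin K // ⟦k⟧ = enum β} with hdr
  set eqv : ∀ β : Fin n, Fin (dr β) ≃ {k : Fin K // ⟦k⟧ = enum β} :=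
    fun β => (Fintype.equivFin _).symm with heqv
  have hout : ∀ β : Fin n, (⟦(enum β).out⟧ : Quotient sd) = enum β := fun β => Quotient.out_eq _
  have hTex : ∀ (β : Fin n) (k : Fin K), (⟦k⟧ : Quotient sd) = enum β →
      ∃ T : W ((enum β).out) →ₗ[ℂ] W k, Itw F (hmin (enum β).out).1 T ∧
        Function.Bijective T ∧ ∀ x y, ⟪T x, T y⟫_ℂ = ⟪x, y⟫_ℂ := by
    intro β k hk
    have hrel : R (enum β).out k := Quotient.exact ((hout β).trans hk.symm)
    obtain ⟨T, hT, hTne⟩ := hrel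
    obtain ⟨T', h1, h2, h3⟩ := exists_unitary_itw hF (hmin _) (hmin k) hT hTne
    exact ⟨T', h1, h2, h3⟩
  choose T hT1 hT2 hT3 using hTex
  set u : ∀ β : Fin n, OrthonormalBasis (Fin (dl β)) ℂ (W (enum β).out) :=
    fun β => stdOrthonormalBasis ℂ (W (enum β).out) with hu
  refine ⟨n, dl, dr, fun p => (T p.1 (eqv p.1 p.2.2).1 (eqv p.1 p.2.2).2 (u p.1 p.2.1) : E),
    ?_, ?_, ?_, ?_⟩
  · -- orthonormality
    rw [orthonormal_iff_ite]
    rintro ⟨β, i, j⟩ ⟨β', i', j'⟩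
    by_cases hk : (eqv β j).1 = (eqv β' j').1
    · have hββ' : β = β' := by
        apply enum.injective
        rw [← (eqv β j).2, ← (eqv β' j').2, hk]
      subst hββ'
      have hjj' : j = j' := (eqv β).injective (Subtype.ext hk)
      subst hjj'
      rw [← Submodule.coe_inner, hT3 β (eqv β j).1 (eqv β j).2 (u β i) (u β i'),
        orthonormal_iff_ite.mp (u β).orthonormal i i']
      by_cases hii : i = i' <;> simp [hii]
    · have h0 := horth _ _ hk _ (T β (eqv β j).1 (eqv β j).2 (u β i)).2
        _ (T β' (eqv β' j').1 (eqv β' j').2 (u β' i')).2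
      rw [h0, if_neg]
      intro h
      obtain ⟨rfl, h2⟩ := Sigma.mk.inj_iff.mp h
      rw [heq_iff_eq, Prod.mk.injEq] at h2
      obtain ⟨rfl, rfl⟩ := h2
      exact hk rfl
  · -- spanning
    rw [eq_top_iff, ← hsup]
    refine iSup_le fun k => ?_
    obtain ⟨β, hβ⟩ : ∃ β, enum β = ⟦k⟧ := ⟨enum.symm ⟦k⟧, enum.apply_symm_apply _⟩
    have hkβ : (⟦k⟧ : Quotient sd) = enum β := hβ.symm
    obtain ⟨j, hj⟩ : ∃ j : Fin (dr β), (eqv β) j = ⟨k, hkβ⟩ :=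
      ⟨(eqv β).symm _, (eqv β).apply_symm_apply _⟩
    have hkeq : ((eqv β) j).1 = k := by rw [hj]
    intro y hy
    rw [← hkeq] at hy
    obtain ⟨x, hx⟩ := (hT2 β _ ((eqv β) j).2).2 ⟨y, hy⟩
    have hyx : y = (T β _ ((eqv β) j).2 x : E) := by rw [hx]
    have hrepr : x = ∑ i, (u β).repr x i • (u β) i := ((u β).sum_repr x).symm
    have hTx : (T β _ ((eqv β) j).2 x : E)
        = ∑ i, (u β).repr x i • (T β _ ((eqv β) j).2 ((u β) i) : E) := by
      conv_lhs => rw [hrepr]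
      rw [map_sum]
      push_cast
      simp only [map_smul, Submodule.coe_smul]
    rw [hyx, hTx]
    refine Submodule.sum_mem _ fun i _ => Submodule.smul_mem _ _ ?_
    exact Submodule.subset_span ⟨⟨β, (i, j)⟩, rfl⟩
  · -- action of F
    intro a ha
    refine ⟨fun β i i' => ⟪((u β) i : E), a ((u β) i' : E)⟫_ℂ, fun β i' j => ?_⟩
    set k := ((eqv β) j).1 with hk
    set hkm := ((eqv β) j).2
    set Tj := T β k hkm with hTj
    have hz : a ((u β) i' : E) ∈ W (enum β).out :=
      (hmin (enum β).out).1 a ha _ ((u β) i').2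
    set z : W (enum β).out := ⟨a ((u β) i' : E), hz⟩ with hz'
    have h1 : a ((Tj ((u β) i') : W k) : E) = (Tj z : E) := (hT1 β k hkm a ha ((u β) i')).symm
    rw [h1]
    have hzrepr : z = ∑ i, ⟪(u β) i, z⟫_ℂ • (u β) i := ((u β).sum_repr' z).symm
    conv_lhs => rw [hzrepr, map_sum]
    rw [Submodule.coe_sum]
    refine Finset.sum_congr rfl fun i _ => ?_
    rw [map_smul, Submodule.coe_smul]
    rfl
  · -- action of F'
    intro g hg
    -- the projected-intertwiner: for each k, the composition P_k ∘ g ∘ T_{j'}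
    have hΦitw : ∀ (β : Fin n) (j' : Fin (dr β)) (k : Fin K),
        Itw F (hmin (enum β).out).1
          (((orthogonalProjection (W k) : E →ₗ[ℂ] W k) ∘ₗ (g ∘ₗ (W ((eqv β) j').1).subtype)) ∘ₗ
            T β _ ((eqv β) j').2) := by
      intro β j' k a ha x
      show (orthogonalProjection (W k) (g ((T β _ ((eqv β) j').2 ⟨a ↑x, _⟩ : _) : E)) : E) = _
      rw [hT1 β _ ((eqv β) j').2 a ha x, ← hcomm a ha g hg,
        proj_comm hF (hmin k).1 ha]
      rfl
    have vanish : ∀ (β : Fin n) (j' : Fin (dr β)) (k : Fin K),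
        (⟦k⟧ : Quotient sd) ≠ enum β → ∀ i : Fin (dl β),
        (orthogonalProjection (W k) (g (T β _ ((eqv β) j').2 ((u β) i) : E)) : E) = 0 := by
      intro β j' k hk i
      by_cases hΦ : (((orthogonalProjection (W k) : E →ₗ[ℂ] W k) ∘ₗ
          (g ∘ₗ (W ((eqv β) j').1).subtype)) ∘ₗ T β _ ((eqv β) j').2) = 0
      · have := congrFun (congrArg DFunLike.coe hΦ) ((u β) i)
        simp only [LinearMap.comp_apply, LinearMap.zero_apply] at this
        rw [show orthogonalProjection (W k) (g (T β _ ((eqv β) j').2 ((u β) i) : E)) = 0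
          from this]
        simp
      · exfalso
        apply hk
        have hrel : R (enum β).out k := ⟨_, hΦitw β j' k, hΦ⟩
        rw [← Quotient.sound (hrel : (enum β).out ≈ k), hout β]
    have key : ∀ (β : Fin n) (k : Fin K) (hk : (⟦k⟧ : Quotient sd) = enum β)
        (j' : Fin (dr β)), ∃ c : ℂ, ∀ i : Fin (dl β),
        (orthogonalProjection (W k)
          (g (T β _ ((eqv β) j').2 ((u β) i) : E)) : E)
        = c • (T β k hk ((u β) i) : E) := by
      intro β k hk j'
      set Φ : W ((enum β).out) →ₗ[ℂ] W k :=
        ((orthogonalProjection (W k) : E →ₗ[ℂ] W k) ∘ₗ (g ∘ₗ (W ((eqv β) j').1).subtype)) ∘ₗ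
          T β _ ((eqv β) j').2 with hΦdef
      have hadjitw := itw_adjoint hF (hmin (enum β).out).1 (hmin k).1 (hT1 β k hk)
      have hΘitw : Itw F (hmin (enum β).out).1 (LinearMap.adjoint (T β k hk) ∘ₗ Φ) :=
        itw_comp (hmin k).1 (hΦitw β j' k) hadjitw
      obtain ⟨c, hc⟩ := schur_scalar (hmin (enum β).out) hΘitw
      have hTadj : ∀ x, LinearMap.adjoint (T β k hk) (T β k hk x) = x := by
        intro x
        refine ext_inner_right ℂ fun y => ?_
        rw [LinearMap.adjoint_inner_left]
        exact hT3 β k hk x y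
      have hTTadj : ∀ z, T β k hk (LinearMap.adjoint (T β k hk) z) = z := by
        intro z
        obtain ⟨x, rfl⟩ := (hT2 β k hk).2 z
        rw [hTadj]
      refine ⟨c, fun i => ?_⟩
      have h1 : orthogonalProjection (W k) (g (T β _ ((eqv β) j').2 ((u β) i) : E))
          = Φ ((u β) i) := rfl
      rw [h1, ← hTTadj (Φ ((u β) i)),
        show LinearMap.adjoint (T β k hk) (Φ ((u β) i))
          = c • ((u β) i) from hc ((u β) i), map_smul, Submodule.coe_smul]
    choose c hc using key
    refine ⟨fun β j j' => c β ((eqv β) j).1 ((eqv β) j).2 j', fun β i j' => ?_⟩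
    rw [← sum_proj W horth hsup (g (T β _ ((eqv β) j').2 ((u β) i) : E))]
    rw [← Finset.sum_filter_of_ne
      (p := fun k => (⟦k⟧ : Quotient sd) = enum β)
      (fun k _ hne => by
        by_contra hkk
        exact hne (by rw [vanish β j' k hkk i]))]
    refine Finset.sum_bij' (i := fun k hk => (eqv β).symm ⟨k, (Finset.mem_filter.mp hk).2⟩)
      (j := fun j _ => ((eqv β) j).1) ?_ ?_ ?_ ?_ ?_
    · intro k _
      exact Finset.mem_univ _
    · intro j _
      exact Finset.mem_filter.mpr ⟨Finset.mem_univ _, ((eqv β) j).2⟩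
    · intro k hk
      rw [Equiv.apply_symm_apply]
    · intro j _
      rw [Subtype.coe_eta, Equiv.symm_apply_apply]
    · intro k hk
      dsimp only
      have hmem := (Finset.mem_filter.mp hk).2
      have h4 : (eqv β) ((eqv β).symm ⟨k, (Finset.mem_filter.mp hk).2⟩)
          = ⟨k, (Finset.mem_filter.mp hk).2⟩ := Equiv.apply_symm_apply _ _
      rw [h4]
      exact hc β k (Finset.mem_filter.mp hk).2 j' i

end Stmt1Aux


open Stmt1Aux

open Matrix
open scoped Kronecker InnerProductSpace

theorem stmt_1 (dB : ℕ) (S S' : Set (Matrix (Fin dB) (Fin dB) ℂ))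
    (hS : ∀ M ∈ S, M.IsHermitian) (hS' : ∀ M ∈ S', M.IsHermitian)
    (hcomm : ∀ M ∈ S, ∀ M' ∈ S', M * M' = M' * M) :
    ∃ (n : ℕ) (dl dr : Fin n → ℕ)
      (e : (Σ β : Fin n, Fin (dl β) × Fin (dr β)) ≃ Fin dB)
      (U : Matrix (Fin dB) (Fin dB) ℂ), U ∈ Matrix.unitaryGroup (Fin dB) ℂ ∧
      (∀ M ∈ S, ∃ A : ∀ β, Matrix (Fin (dl β)) (Fin (dl β)) ℂ,
        (∀ β : Fin n, (Uᴴ * M * U).submatrix (fun p => e ⟨β, p⟩) (fun p => e ⟨β, p⟩)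
            = A β ⊗ₖ (1 : Matrix (Fin (dr β)) (Fin (dr β)) ℂ)) ∧
        (∀ β β' : Fin n, β ≠ β' →
          (Uᴴ * M * U).submatrix (fun p => e ⟨β, p⟩) (fun p => e ⟨β', p⟩) = 0)) ∧
      (∀ M' ∈ S', ∃ B : ∀ β, Matrix (Fin (dr β)) (Fin (dr β)) ℂ,
        (∀ β : Fin n, (Uᴴ * M' * U).submatrix (fun p => e ⟨β, p⟩) (fun p => e ⟨β, p⟩)
            = (1 : Matrix (Fin (dl β)) (Fin (dl β)) ℂ) ⊗ₖ B β) ∧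
        (∀ β β' : Fin n, β ≠ β' →
          (Uᴴ * M' * U).submatrix (fun p => e ⟨β, p⟩) (fun p => e ⟨β', p⟩) = 0)) := by
  classical
  set F : Set (EuclideanSpace ℂ (Fin dB) →ₗ[ℂ] EuclideanSpace ℂ (Fin dB)) := (fun M : Matrix (Fin dB) (Fin dB) ℂ => Matrix.toEuclideanLin M) '' S
    with hFdef
  set F' : Set (EuclideanSpace ℂ (Fin dB) →ₗ[ℂ] EuclideanSpace ℂ (Fin dB)) :=
    (fun M : Matrix (Fin dB) (Fin dB) ℂ => Matrix.toEuclideanLin M) '' S' with hF'def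
  have hF : ∀ a ∈ F, LinearMap.adjoint a = a := by
    rintro a ⟨M, hM, rfl⟩
    have h1 := Matrix.isHermitian_iff_isSymmetric.mp (hS M hM)
    have h2 := (LinearMap.isSymmetric_iff_isSelfAdjoint _).mp h1
    rw [← LinearMap.star_eq_adjoint]
    exact h2
  have hmulvec : ∀ (N : Matrix (Fin dB) (Fin dB) ℂ) (v : EuclideanSpace ℂ (Fin dB)) (x : Fin dB),
      (Matrix.toEuclideanLin N v) x = ∑ y, N x y * v y := by
    intro N v x
    rw [Matrix.toEuclideanLin_apply]
    simp [Matrix.mulVec, dotProduct]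
  have hcomm' : ∀ a ∈ F, ∀ g ∈ F', ∀ x, a (g x) = g (a x) := by
    rintro a ⟨M, hM, rfl⟩ g ⟨M', hM', rfl⟩ v
    have h := hcomm M hM M' hM'
    ext x
    rw [hmulvec, hmulvec]
    have e1 : ∀ (P Q : Matrix (Fin dB) (Fin dB) ℂ),
        ∑ y, P x y * (Matrix.toEuclideanLin Q v) y = ∑ y, (P * Q) x y * v y := by
      intro P Q
      simp only [hmulvec, Finset.mul_sum, Matrix.mul_apply, Finset.sum_mul]
      rw [Finset.sum_comm]
      exact Finset.sum_congr rfl fun y _ => Finset.sum_congr rfl fun z _ => by ring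
    rw [e1, e1, h]
  obtain ⟨n, dl, dr, w, hON, hspan, hAact, hBact⟩ := core hF hcomm'
  have hcard : Fintype.card (Σ β : Fin n, Fin (dl β) × Fin (dr β)) = dB := by
    have hb := Module.finrank_eq_card_basis (Module.Basis.mk hON.linearIndependent (le_of_eq hspan.symm))
    rw [finrank_euclideanSpace_fin] at hb
    exact hb.symm
  set e : (Σ β : Fin n, Fin (dl β) × Fin (dr β)) ≃ Fin dB := Fintype.equivFinOfCardEq hcard
    with hedef
  set U : Matrix (Fin dB) (Fin dB) ℂ := Matrix.of fun x q => w (e.symm q) x with hUdef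
  have hUcol : ∀ (q : Fin dB) (x : Fin dB), U x q = w (e.symm q) x := fun _ _ => rfl
  have hinner : ∀ (v v' : EuclideanSpace ℂ (Fin dB)), ⟪v, v'⟫_ℂ = ∑ x, (starRingEnd ℂ) (v x) * v' x := by
    intro v v'
    rw [PiLp.inner_apply]
    simp [RCLike.inner_apply, mul_comm]
  have hentry : ∀ (M : Matrix (Fin dB) (Fin dB) ℂ)
      (p p' : Σ β : Fin n, Fin (dl β) × Fin (dr β)),
      (Uᴴ * M * U) (e p) (e p') = ⟪w p, Matrix.toEuclideanLin M (w p')⟫_ℂ := by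
    intro M p p'
    have h1 : (Uᴴ * M * U) (e p) (e p')
        = ∑ y, (∑ x, (starRingEnd ℂ) (U x (e p)) * M x y) * U y (e p') := by
      rw [Matrix.mul_apply]
      refine Finset.sum_congr rfl fun y _ => ?_
      rw [Matrix.mul_apply]
      refine congrArg (· * U y (e p')) (Finset.sum_congr rfl fun x _ => ?_)
      rw [Matrix.conjTranspose_apply]
      rfl
    rw [h1, hinner]
    simp only [hmulvec, hUcol, Equiv.symm_apply_apply, Finset.sum_mul, Finset.mul_sum]
    rw [Finset.sum_comm]
    exact Finset.sum_congr rfl fun x _ => Finset.sum_congr rfl fun y _ => by ring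
  have hortho := orthonormal_iff_ite.mp hON
  have hUmem : U ∈ Matrix.unitaryGroup (Fin dB) ℂ := by
    rw [Matrix.mem_unitaryGroup_iff']
    ext q q'
    rw [Matrix.star_eq_conjTranspose, Matrix.mul_apply, Matrix.one_apply]
    have h2 : ∑ x, Uᴴ q x * U x q' = ⟪w (e.symm q), w (e.symm q')⟫_ℂ := by
      rw [hinner]
      exact Finset.sum_congr rfl fun x _ => by rw [Matrix.conjTranspose_apply, hUcol, hUcol]; rfl
    rw [h2, hortho]
    by_cases hqq : q = q'
    · simp [hqq]
    · rw [if_neg (fun hc => hqq (by simpa using congrArg e hc)), if_neg hqq]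
  refine ⟨n, dl, dr, e, U, hUmem, ?_, ?_⟩
  · intro M hM
    obtain ⟨A, hA⟩ := hAact (Matrix.toEuclideanLin M) ⟨M, hM, rfl⟩
    refine ⟨A, fun β => ?_, fun β β' hββ' => ?_⟩
    · ext ⟨i, j⟩ ⟨i', j'⟩
      rw [Matrix.submatrix_apply, hentry, hA β i' j', inner_sum]
      simp only [inner_smul_right, hortho]
      simp only [Sigma.mk.inj_iff, heq_iff_eq, Prod.mk.injEq, true_and, mul_ite, mul_one,
        mul_zero, Matrix.kroneckerMap_apply, Matrix.one_apply]
      by_cases hjj : j = j'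
      · subst hjj
        simp only [and_true]
        rw [Finset.sum_ite_eq Finset.univ i (fun i'' => A β i'' i')]
        simp
      · simp [hjj, fun i'' => (fun hc : i = i'' ∧ j = j' => hjj hc.2)]
    · ext ⟨i, j⟩ ⟨i', j'⟩
      rw [Matrix.submatrix_apply, hentry, hA β' i' j', inner_sum]
      simp only [inner_smul_right, hortho]
      simp only [Sigma.mk.inj_iff, mul_ite, mul_one, mul_zero, Matrix.zero_apply]
      rw [Finset.sum_eq_zero]
      intro i'' _
      rw [if_neg]
      exact fun hc => hββ' hc.1
  · intro M' hM'
    obtain ⟨B, hB⟩ := hBact (Matrix.toEuclideanLin M') ⟨M', hM', rfl⟩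
    refine ⟨B, fun β => ?_, fun β β' hββ' => ?_⟩
    · ext ⟨i, j⟩ ⟨i', j'⟩
      rw [Matrix.submatrix_apply, hentry, hB β i' j', inner_sum]
      simp only [inner_smul_right, hortho]
      simp only [Sigma.mk.inj_iff, heq_iff_eq, Prod.mk.injEq, true_and, mul_ite, mul_one,
        mul_zero, Matrix.kroneckerMap_apply, Matrix.one_apply]
      by_cases hii : i = i'
      · subst hii
        simp only [true_and]
        rw [Finset.sum_ite_eq Finset.univ j (fun j'' => B β j'' j')]
        simp
      · simp [hii, fun j'' => (fun hc : i = i' ∧ j = j'' => hii hc.1)]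
    · ext ⟨i, j⟩ ⟨i', j'⟩
      rw [Matrix.submatrix_apply, hentry, hB β' i' j', inner_sum]
      simp only [inner_smul_right, hortho]
      simp only [Sigma.mk.inj_iff, mul_ite, mul_one, mul_zero, Matrix.zero_apply]
      rw [Finset.sum_eq_zero]
      intro j'' _
      rw [if_neg]
      exact fun hc => hββ' hc.1
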